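/- Let λ1 ≥ λ2 ≥ 0 > λ3 ≥ λ4 ≥ λ5 ≥ −λ1 be real numbers with s := λ1 + λ2 + λ3 + λ4 + λ5 ≥ 0, λ1 + λ3 + λ4 ≥ 0 and λ2 + λ5 < 0. Set a = (1/2)·√((λ1+λ5)(λ2+λ5)(λ3+λ4)/(λ1+λ2−λ3+λ5)), b = √(−(λ1+λ5)(λ2+λ5)(λ1+λ2+λ4+λ5)/(2(λ1+λ2−λ3+λ5))), and c = √(−(λ3+λ4)(λ1+λ2+λ4+λ5)/2). Then λ1+λ2−λ3+λ5 > 0, each quantity under a square root is nonnegative, and the 5×5 matrix L2 with rows (0, a, b, a, −λ5), (a, 0, c, −λ4, a), (b, c, s, c, b), (a, −λ4, c, 0, a), (−λ5, a, b, a, 0) is nonnegative and bisymmetric, and its spectrum is λ1, λ2, λ3, λ4, λ5. -/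

import Mathlib

open Matrix Polynomial

/-- The 5×5 reverse identity (exchange) matrix. -/
def J5 : Matrix (Fin 5) (Fin 5) ℝ :=
  Matrix.of fun i j => if (i : ℕ) + (j : ℕ) = 4 then 1 else 0

section DetAux

variable {R : Type*} [CommRing R]

set_option maxHeartbeats 1000000 in
theorem det_fin_four' (M : Matrix (Fin 4) (Fin 4) R) :
    M.det =
      M 0 0 * (M 1 1 * (M 2 2 * M 3 3 - M 2 3 * M 3 2) - M 1 2 * (M 2 1 * M 3 3 - M 2 3 * M 3 1) + M 1 3 * (M 2 1 * M 3 2 - M 2 2 * M 3 1))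
    - M 0 1 * (M 1 0 * (M 2 2 * M 3 3 - M 2 3 * M 3 2) - M 1 2 * (M 2 0 * M 3 3 - M 2 3 * M 3 0) + M 1 3 * (M 2 0 * M 3 2 - M 2 2 * M 3 0))
    + M 0 2 * (M 1 0 * (M 2 1 * M 3 3 - M 2 3 * M 3 1) - M 1 1 * (M 2 0 * M 3 3 - M 2 3 * M 3 0) + M 1 3 * (M 2 0 * M 3 1 - M 2 1 * M 3 0))
    - M 0 3 * (M 1 0 * (M 2 1 * M 3 2 - M 2 2 * M 3 1) - M 1 1 * (M 2 0 * M 3 2 - M 2 2 * M 3 0) + M 1 2 * (M 2 0 * M 3 1 - M 2 1 * M 3 0)) := by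
  rw [Matrix.det_succ_row_zero, Fin.sum_univ_four]
  simp [Matrix.det_fin_three, Fin.succAbove, Fin.lt_def, show (Fin.succ 2 : Fin 4) = 3 from rfl,
    show ((3:Fin 4):ℕ) = 3 from rfl, show (Fin.castSucc 2 : Fin 4) = 2 from rfl]
  ring

set_option maxHeartbeats 2000000 in
theorem det_fin_five' (M : Matrix (Fin 5) (Fin 5) R) :
    M.det = M 0 0 * (M 1 1 * (M 2 2 * (M 3 3 * M 4 4 - M 3 4 * M 4 3) - M 2 3 * (M 3 2 * M 4 4 - M 3 4 * M 4 2) + M 2 4 * (M 3 2 * M 4 3 - M 3 3 * M 4 2)) - M 1 2 * (M 2 1 * (M 3 3 * M 4 4 - M 3 4 * M 4 3) - M 2 3 * (M 3 1 * M 4 4 - M 3 4 * M 4 1) + M 2 4 * (M 3 1 * M 4 3 - M 3 3 * M 4 1)) + M 1 3 * (M 2 1 * (M 3 2 * M 4 4 - M 3 4 * M 4 2) - M 2 2 * (M 3 1 * M 4 4 - M 3 4 * M 4 1) + M 2 4 * (M 3 1 * M 4 2 - M 3 2 * M 4 1)) - M 1 4 * (M 2 1 * (M 3 2 * M 4 3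 - M 3 3 * M 4 2) - M 2 2 * (M 3 1 * M 4 3 - M 3 3 * M 4 1) + M 2 3 * (M 3 1 * M 4 2 - M 3 2 * M 4 1))) - M 0 1 * (M 1 0 * (M 2 2 * (M 3 3 * M 4 4 - M 3 4 * M 4 3) - M 2 3 * (M 3 2 * M 4 4 - M 3 4 * M 4 2) + M 2 4 * (M 3 2 * M 4 3 - M 3 3 * M 4 2)) - M 1 2 * (M 2 0 * (M 3 3 * M 4 4 - M 3 4 * M 4 3) - M 2 3 * (M 3 0 * M 4 4 - M 3 4 * M 4 0) + M 2 4 * (M 3 0 * M 4 3 - M 3 3 * M 4 0)) + M 1 3 * (M 2 0 * (M 3 2 * M 4 4 - M 3 4 * M 4 2) - M 2 2 * (M 3 0 * M 4 4 - M 3 4 * M 4 0) + M 2 4 * (M 3 0 * M 4 2 - M 3 2 * M 4 0)) - M 1 4 * (M 2 0 * (M 3 2 * M 4 3 - M 3 3 * M 4 2) - M 2 2 * (M 3 0 * M 4 3 - M 3 3 * M 4 0) + M 2 3 * (M 3 0 * M 4 2 - M 3 2 * M 4 0))) + M 0 2 * (M 1 0 * (M 2 1 * (M 3 3 * M 4 4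 - M 3 4 * M 4 3) - M 2 3 * (M 3 1 * M 4 4 - M 3 4 * M 4 1) + M 2 4 * (M 3 1 * M 4 3 - M 3 3 * M 4 1)) - M 1 1 * (M 2 0 * (M 3 3 * M 4 4 - M 3 4 * M 4 3) - M 2 3 * (M 3 0 * M 4 4 - M 3 4 * M 4 0) + M 2 4 * (M 3 0 * M 4 3 - M 3 3 * M 4 0)) + M 1 3 * (M 2 0 * (M 3 1 * M 4 4 - M 3 4 * M 4 1) - M 2 1 * (M 3 0 * M 4 4 - M 3 4 * M 4 0) + M 2 4 * (M 3 0 * M 4 1 - M 3 1 * M 4 0)) - M 1 4 * (M 2 0 * (M 3 1 * M 4 3 - M 3 3 * M 4 1) - M 2 1 * (M 3 0 * M 4 3 - M 3 3 * M 4 0) + M 2 3 * (M 3 0 * M 4 1 - M 3 1 * M 4 0))) - M 0 3 * (M 1 0 * (M 2 1 * (M 3 2 * M 4 4 - M 3 4 * M 4 2) - M 2 2 * (M 3 1 * M 4 4 - M 3 4 * M 4 1) + M 2 4 * (M 3 1 * M 4 2 - M 3 2 * M 4 1)) - M 1 1 * (M 2 0 * (M 3 2 * M 4 4 - M 3 4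 * M 4 2) - M 2 2 * (M 3 0 * M 4 4 - M 3 4 * M 4 0) + M 2 4 * (M 3 0 * M 4 2 - M 3 2 * M 4 0)) + M 1 2 * (M 2 0 * (M 3 1 * M 4 4 - M 3 4 * M 4 1) - M 2 1 * (M 3 0 * M 4 4 - M 3 4 * M 4 0) + M 2 4 * (M 3 0 * M 4 1 - M 3 1 * M 4 0)) - M 1 4 * (M 2 0 * (M 3 1 * M 4 2 - M 3 2 * M 4 1) - M 2 1 * (M 3 0 * M 4 2 - M 3 2 * M 4 0) + M 2 2 * (M 3 0 * M 4 1 - M 3 1 * M 4 0))) + M 0 4 * (M 1 0 * (M 2 1 * (M 3 2 * M 4 3 - M 3 3 * M 4 2) - M 2 2 * (M 3 1 * M 4 3 - M 3 3 * M 4 1) + M 2 3 * (M 3 1 * M 4 2 - M 3 2 * M 4 1)) - M 1 1 * (M 2 0 * (M 3 2 * M 4 3 - M 3 3 * M 4 2) - M 2 2 * (M 3 0 * M 4 3 - M 3 3 * M 4 0) + M 2 3 * (M 3 0 * M 4 2 - M 3 2 * M 4 0)) + M 1 2 * (M 2 0 * (M 3 1 * M 4 3 - M 3 3 * M 4 1)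 - M 2 1 * (M 3 0 * M 4 3 - M 3 3 * M 4 0) + M 2 3 * (M 3 0 * M 4 1 - M 3 1 * M 4 0)) - M 1 3 * (M 2 0 * (M 3 1 * M 4 2 - M 3 2 * M 4 1) - M 2 1 * (M 3 0 * M 4 2 - M 3 2 * M 4 0) + M 2 2 * (M 3 0 * M 4 1 - M 3 1 * M 4 0))) := by
  rw [Matrix.det_succ_row_zero, Fin.sum_univ_five]
  simp [det_fin_four', Fin.succAbove, Fin.lt_def,
    show (Fin.succ 0 : Fin 5) = 1 from rfl, show (Fin.succ 1 : Fin 5) = 2 from rfl,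
    show (Fin.succ 2 : Fin 5) = 3 from rfl, show (Fin.succ 3 : Fin 5) = 4 from rfl,
    show (Fin.castSucc 1 : Fin 5) = 1 from rfl, show (Fin.castSucc 2 : Fin 5) = 2 from rfl,
    show (Fin.castSucc 3 : Fin 5) = 3 from rfl,
    show ((0:Fin 5):ℕ) = 0 from rfl, show ((1:Fin 5):ℕ) = 1 from rfl,
    show ((2:Fin 5):ℕ) = 2 from rfl, show ((3:Fin 5):ℕ) = 3 from rfl, show ((4:Fin 5):ℕ) = 4 from rfl]
  ring

end DetAux

set_option maxHeartbeats 2000000 in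
theorem charpoly_aux (a b c l1 l2 l3 l4 l5 : ℝ)
    (hd : l1+l2-l3+l5 ≠ 0)
    (HA : 4*(l1+l2-l3+l5)*a^2 = (l1+l5)*(l2+l5)*(l3+l4))
    (HB : 2*(l1+l2-l3+l5)*b^2 = -((l1+l5)*(l2+l5)*(l1+l2+l4+l5)))
    (HC : 2*c^2 = -((l3+l4)*(l1+l2+l4+l5)))
    (HABC : 4*(l1+l2-l3+l5)*(a*b*c) = (l1+l5)*(l2+l5)*(l3+l4)*(l1+l2+l4+l5)) :
    (!![0, a, b, a, -l5;
        a, 0, c, -l4, a;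
        b, c, l1 + l2 + l3 + l4 + l5, c, b;
        a, -l4, c, 0, a;
        -l5, a, b, a, 0] : Matrix (Fin 5) (Fin 5) ℝ).charpoly
      = (X - C l1) * (X - C l2) * (X - C l3) * (X - C l4) * (X - C l5) := by
  apply Polynomial.funext
  intro x
  rw [Matrix.charpoly, _root_.eval_det, matPolyEquiv_charmatrix]
  rw [eval_sub, eval_X, eval_C]
  rw [show (Matrix.scalar (Fin 5) x) -
      (!![0, a, b, a, -l5;
          a, 0, c, -l4, a;
          b, c, l1 + l2 + l3 + l4 + l5, c, b;
          a, -l4, c, 0, a;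
          -l5, a, b, a, 0] : Matrix (Fin 5) (Fin 5) ℝ) =
      !![x,-a,-b,-a,l5; -a,x,-c,l4,-a; -b,-c,x-(l1+l2+l3+l4+l5),-c,-b; -a,l4,-c,x,-a;
         l5,-a,-b,-a,x] from by
    ext i j
    fin_cases i <;> fin_cases j <;> simp [Matrix.scalar]]
  rw [det_fin_five']
  simp only [Matrix.cons_val', Matrix.cons_val_zero, Matrix.cons_val_one, Matrix.head_cons,
    Matrix.empty_val', Matrix.cons_val_fin_one, Matrix.head_fin_const, Matrix.cons_val_two,
    Matrix.cons_val_three, Matrix.cons_val_four, Matrix.tail_cons, Matrix.of_apply,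
    eval_mul, eval_sub, eval_X, eval_C]
  rw [← sub_eq_zero]
  refine (mul_eq_zero.mp (?_ : (l1+l2-l3+l5) * _ = 0)).resolve_left hd
  linear_combination (-(x-l4)*(x-l5)*(x-(l1+l2+l3+l4+l5)))*HA + (-(x-l4)*(x-l5)*(x+l4))*HB +
    (-(x-l4)*(x-l5)*(x+l5)*(l1+l2-l3+l5))*HC + (-2*(x-l4)*(x-l5))*HABC
set_option maxHeartbeats 2000000 in
theorem stmt_7 (l1 l2 l3 l4 l5 : ℝ)
    (h12 : l1 ≥ l2) (h2 : l2 ≥ 0) (h3 : 0 > l3) (h34 : l3 ≥ l4) (h45 : l4 ≥ l5)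
    (h5 : l5 ≥ -l1)
    (hsum : l1 + l2 + l3 + l4 + l5 ≥ 0)
    (h134 : l1 + l3 + l4 ≥ 0) (h25 : l2 + l5 < 0) :
    0 < l1 + l2 - l3 + l5 ∧
    0 ≤ (l1 + l5) * (l2 + l5) * (l3 + l4) / (l1 + l2 - l3 + l5) ∧
    0 ≤ -((l1 + l5) * (l2 + l5) * (l1 + l2 + l4 + l5)) / (2 * (l1 + l2 - l3 + l5)) ∧
    0 ≤ -((l3 + l4) * (l1 + l2 + l4 + l5)) / 2 ∧
    let a : ℝ := (1 / 2) * Real.sqrt ((l1 + l5) * (l2 + l5) * (l3 + l4) / (l1 + l2 - l3 + l5))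
    let b : ℝ := Real.sqrt (-((l1 + l5) * (l2 + l5) * (l1 + l2 + l4 + l5)) / (2 * (l1 + l2 - l3 + l5)))
    let c : ℝ := Real.sqrt (-((l3 + l4) * (l1 + l2 + l4 + l5)) / 2)
    let L2 : Matrix (Fin 5) (Fin 5) ℝ :=
      !![0, a, b, a, -l5;
         a, 0, c, -l4, a;
         b, c, l1 + l2 + l3 + l4 + l5, c, b;
         a, -l4, c, 0, a;
         -l5, a, b, a, 0]
    (∀ i j, 0 ≤ L2 i j) ∧ L2 = L2ᵀ ∧ L2 * J5 = J5 * L2 ∧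
      L2.charpoly = (X - C l1) * (X - C l2) * (X - C l3) * (X - C l4) * (X - C l5) := by
  have h15 : 0 ≤ l1 + l5 := by linarith
  have he : 0 < l1 + l2 + l4 + l5 := by linarith
  have hd : 0 < l1 + l2 - l3 + l5 := by linarith
  have hl34 : l3 + l4 < 0 := by linarith
  have hn1 : 0 ≤ (l1 + l5) * (l2 + l5) * (l3 + l4) := by
    nlinarith [mul_nonneg h15 (mul_nonneg (neg_nonneg.2 h25.le) (neg_nonneg.2 hl34.le))]
  have hq1 : 0 ≤ (l1 + l5) * (l2 + l5) * (l3 + l4) / (l1 + l2 - l3 + l5) :=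
    div_nonneg hn1 hd.le
  have hq2 : 0 ≤ -((l1 + l5) * (l2 + l5) * (l1 + l2 + l4 + l5)) / (2 * (l1 + l2 - l3 + l5)) := by
    refine div_nonneg ?_ (by linarith)
    nlinarith [mul_nonneg (mul_nonneg h15 (neg_nonneg.2 h25.le)) he.le]
  have hq3 : 0 ≤ -((l3 + l4) * (l1 + l2 + l4 + l5)) / 2 := by
    refine div_nonneg ?_ (by norm_num)
    nlinarith [mul_nonneg (neg_nonneg.2 hl34.le) he.le]
  refine ⟨hd, hq1, hq2, hq3, ?_⟩
  intro a b c L2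
  have ha : a = (1 / 2) * Real.sqrt ((l1 + l5) * (l2 + l5) * (l3 + l4) / (l1 + l2 - l3 + l5)) := rfl
  have hb : b = Real.sqrt (-((l1 + l5) * (l2 + l5) * (l1 + l2 + l4 + l5)) / (2 * (l1 + l2 - l3 + l5))) := rfl
  have hc : c = Real.sqrt (-((l3 + l4) * (l1 + l2 + l4 + l5)) / 2) := rfl
  have hL2 : L2 = !![0, a, b, a, -l5;
         a, 0, c, -l4, a;
         b, c, l1 + l2 + l3 + l4 + l5, c, b;
         a, -l4, c, 0, a;
         -l5, a, b, a, 0] := rfl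
  have HA : 4*(l1+l2-l3+l5)*a^2 = (l1+l5)*(l2+l5)*(l3+l4) := by
    rw [ha, mul_pow, Real.sq_sqrt hq1]
    field_simp [ne_of_gt hd]
    ring
  have HB : 2*(l1+l2-l3+l5)*b^2 = -((l1+l5)*(l2+l5)*(l1+l2+l4+l5)) := by
    rw [hb, Real.sq_sqrt hq2]
    field_simp [ne_of_gt hd]
  have HC : 2*c^2 = -((l3+l4)*(l1+l2+l4+l5)) := by
    rw [hc, Real.sq_sqrt hq3]
    ring
  have hKd : 0 ≤ (l1+l5)*(l2+l5)*(l3+l4)*(l1+l2+l4+l5) / (2*(l1+l2-l3+l5)) := by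
    refine div_nonneg (mul_nonneg hn1 he.le) (by linarith)
  have hsqrtmul : Real.sqrt ((l1 + l5) * (l2 + l5) * (l3 + l4) / (l1 + l2 - l3 + l5)) *
      Real.sqrt (-((l1 + l5) * (l2 + l5) * (l1 + l2 + l4 + l5)) / (2 * (l1 + l2 - l3 + l5))) *
      Real.sqrt (-((l3 + l4) * (l1 + l2 + l4 + l5)) / 2)
      = Real.sqrt (((l1 + l5) * (l2 + l5) * (l3 + l4) / (l1 + l2 - l3 + l5)) *
          (-((l1 + l5) * (l2 + l5) * (l1 + l2 + l4 + l5)) / (2 * (l1 + l2 - l3 + l5))) *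
          (-((l3 + l4) * (l1 + l2 + l4 + l5)) / 2)) := by
    rw [← Real.sqrt_mul hq1, ← Real.sqrt_mul (mul_nonneg hq1 hq2)]
  have hq123 : ((l1 + l5) * (l2 + l5) * (l3 + l4) / (l1 + l2 - l3 + l5)) *
          (-((l1 + l5) * (l2 + l5) * (l1 + l2 + l4 + l5)) / (2 * (l1 + l2 - l3 + l5))) *
          (-((l3 + l4) * (l1 + l2 + l4 + l5)) / 2)
      = ((l1+l5)*(l2+l5)*(l3+l4)*(l1+l2+l4+l5) / (2*(l1+l2-l3+l5)))^2 := by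
    field_simp
  have habc : a * b * c
      = 1/2 * ((l1+l5)*(l2+l5)*(l3+l4)*(l1+l2+l4+l5) / (2*(l1+l2-l3+l5))) := by
    calc a * b * c
        = 1/2 * (Real.sqrt ((l1 + l5) * (l2 + l5) * (l3 + l4) / (l1 + l2 - l3 + l5)) *
            Real.sqrt (-((l1 + l5) * (l2 + l5) * (l1 + l2 + l4 + l5)) / (2 * (l1 + l2 - l3 + l5))) *
            Real.sqrt (-((l3 + l4) * (l1 + l2 + l4 + l5)) / 2)) := by rw [ha, hb, hc]; ring
      _ = 1/2 * ((l1+l5)*(l2+l5)*(l3+l4)*(l1+l2+l4+l5) / (2*(l1+l2-l3+l5))) := by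
            rw [hsqrtmul, hq123, Real.sqrt_sq hKd]
  have HABC : 4*(l1+l2-l3+l5)*(a*b*c) = (l1+l5)*(l2+l5)*(l3+l4)*(l1+l2+l4+l5) := by
    rw [habc]
    field_simp [ne_of_gt hd]
    ring
  have ha0 : 0 ≤ a := by rw [ha]; positivity
  have hb0 : 0 ≤ b := Real.sqrt_nonneg _
  have hc0 : 0 ≤ c := Real.sqrt_nonneg _
  refine ⟨?_, ?_, ?_, ?_⟩
  · intro i j
    fin_cases i <;> fin_cases j <;> simp [hL2] <;> linarith
  · rw [hL2]
    ext i j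
    fin_cases i <;> fin_cases j <;> rfl
  · rw [hL2]
    ext i j
    fin_cases i <;> fin_cases j <;>
      norm_num [J5, Matrix.mul_apply, Fin.sum_univ_five, Matrix.cons_val,
        show ((0:Fin 5):ℕ) = 0 from rfl, show ((1:Fin 5):ℕ) = 1 from rfl,
        show ((2:Fin 5):ℕ) = 2 from rfl, show ((3:Fin 5):ℕ) = 3 from rfl,
        show ((4:Fin 5):ℕ) = 4 from rfl] <;> rfl
  · rw [hL2]
    exact charpoly_aux a b c l1 l2 l3 l4 l5 (ne_of_gt hd) HA HB HC HABC
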